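/- If W is a C² solution of W_z̄ = −(s(x)j/2) conj(W) with s continuously differentiable, then the function w := W_z + (s(x)j/2) conj(W) satisfies w_z̄ = (s(x)j/2) conj(w). -/

import Mathlib

/-- Hyperbolic (split-complex / duplex) numbers `x + j t`, with `j ^ 2 = 1`. -/
structure Hyp where
  re : ℝ
  im : ℝ

namespace Hyp

instance : Zero Hyp := ⟨⟨0, 0⟩⟩
instance : One Hyp := ⟨⟨1, 0⟩⟩
instance : Add Hyp := ⟨fun z w => ⟨z.re + w.re, z.im + w.im⟩⟩
instance : Neg Hyp := ⟨fun z => ⟨-z.re, -z.im⟩⟩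
instance : Sub Hyp := ⟨fun z w => ⟨z.re - w.re, z.im - w.im⟩⟩
/-- multiplication determined by `j ^ 2 = 1` -/
instance : Mul Hyp := ⟨fun z w => ⟨z.re * w.re + z.im * w.im, z.re * w.im + z.im * w.re⟩⟩
instance : SMul ℝ Hyp := ⟨fun r z => ⟨r * z.re, r * z.im⟩⟩

/-- the hyperbolic imaginary unit `j` -/
def j : Hyp := ⟨0, 1⟩

/-- hyperbolic conjugation `conj (x + j t) = x - j t` -/
def conj (z : Hyp) : Hyp := ⟨z.re, -z.im⟩

/-- the (total) inverse; for non-invertible elements it returns junk -/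
noncomputable instance : Inv Hyp := ⟨fun z => ⟨z.re / (z.re ^ 2 - z.im ^ 2), -z.im / (z.re ^ 2 - z.im ^ 2)⟩⟩
noncomputable instance : Div Hyp := ⟨fun z w => z * w⁻¹⟩

end Hyp

/-- partial derivative in the `x`-direction -/
noncomputable def px (f : ℝ × ℝ → ℝ) (p : ℝ × ℝ) : ℝ := fderiv ℝ f p (1, 0)

/-- partial derivative in the `t`-direction -/
noncomputable def pt (f : ℝ × ℝ → ℝ) (p : ℝ × ℝ) : ℝ := fderiv ℝ f p (0, 1)

/-- real part of a hyperbolic-valued function -/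
def reP (f : ℝ × ℝ → Hyp) : ℝ × ℝ → ℝ := fun q => (f q).re
/-- imaginary (`j`) part of a hyperbolic-valued function -/
def imP (f : ℝ × ℝ → Hyp) : ℝ × ℝ → ℝ := fun q => (f q).im

/-- `∂_z̄ = (1/2)(∂_x - j ∂_t)` acting on `f = u + j v`:
`(1/2)((u_x - v_t) + j (v_x - u_t))`. -/
noncomputable def dzbar (f : ℝ × ℝ → Hyp) (p : ℝ × ℝ) : Hyp :=
  ⟨(px (reP f) p - pt (imP f) p) / 2, (px (imP f) p - pt (reP f) p) / 2⟩

/-- `∂_z = (1/2)(∂_x + j ∂_t)` acting on `f = u + j v`: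
`(1/2)((u_x + v_t) + j (v_x + u_t))`. -/
noncomputable def dz (f : ℝ × ℝ → Hyp) (p : ℝ × ℝ) : Hyp :=
  ⟨(px (reP f) p + pt (imP f) p) / 2, (px (imP f) p + pt (reP f) p) / 2⟩

/-- `∂_z̄` of a real-valued function, as a hyperbolic number. -/
noncomputable def dzbarR (φ : ℝ × ℝ → ℝ) (p : ℝ × ℝ) : Hyp :=
  ⟨px φ p / 2, -(pt φ p) / 2⟩

/-- a function is C¹ (componentwise) -/
def HC1 (f : ℝ × ℝ → Hyp) : Prop := ContDiff ℝ 1 (reP f) ∧ ContDiff ℝ 1 (imP f)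

/-- characteristic coefficient `a_{(F,G)}` -/
noncomputable def charA (F G : ℝ × ℝ → Hyp) (p : ℝ × ℝ) : Hyp :=
  -((Hyp.conj (F p) * dzbar G p - dzbar F p * Hyp.conj (G p)) /
    (F p * Hyp.conj (G p) - Hyp.conj (F p) * G p))

/-- characteristic coefficient `b_{(F,G)}` -/
noncomputable def charB (F G : ℝ × ℝ → Hyp) (p : ℝ × ℝ) : Hyp :=
  (F p * dzbar G p - dzbar F p * G p) /
    (F p * Hyp.conj (G p) - Hyp.conj (F p) * G p)

/-- characteristic coefficient `A_{(F,G)}` -/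
noncomputable def charCapA (F G : ℝ × ℝ → Hyp) (p : ℝ × ℝ) : Hyp :=
  -((Hyp.conj (F p) * dz G p - dz F p * Hyp.conj (G p)) /
    (F p * Hyp.conj (G p) - Hyp.conj (F p) * G p))

/-- characteristic coefficient `B_{(F,G)}` -/
noncomputable def charCapB (F G : ℝ × ℝ → Hyp) (p : ℝ × ℝ) : Hyp :=
  (F p * dz G p - dz F p * G p) /
    (F p * Hyp.conj (G p) - Hyp.conj (F p) * G p)

section Aux

open Filter Topology

lemma Hyp.mul_re' (z w : Hyp) : (z * w).re = z.re * w.re + z.im * w.im := rfl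
lemma Hyp.mul_im' (z w : Hyp) : (z * w).im = z.re * w.im + z.im * w.re := rfl
lemma Hyp.add_re' (z w : Hyp) : (z + w).re = z.re + w.re := rfl
lemma Hyp.add_im' (z w : Hyp) : (z + w).im = z.im + w.im := rfl
lemma Hyp.smul_re' (r : ℝ) (z : Hyp) : (r • z).re = r * z.re := rfl
lemma Hyp.smul_im' (r : ℝ) (z : Hyp) : (r • z).im = r * z.im := rfl
lemma Hyp.conj_re' (z : Hyp) : (Hyp.conj z).re = z.re := rfl
lemma Hyp.conj_im' (z : Hyp) : (Hyp.conj z).im = -z.im := rfl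
lemma Hyp.j_re' : Hyp.j.re = 0 := rfl
lemma Hyp.j_im' : Hyp.j.im = 1 := rfl

lemma Hyp.ext' {z w : Hyp} (h1 : z.re = w.re) (h2 : z.im = w.im) : z = w := by
  cases z; cases w; simp_all

lemma px_congr {f g : ℝ × ℝ → ℝ} {p : ℝ × ℝ} (h : f =ᶠ[𝓝 p] g) : px f p = px g p := by
  unfold px; rw [h.fderiv_eq]

lemma pt_congr {f g : ℝ × ℝ → ℝ} {p : ℝ × ℝ} (h : f =ᶠ[𝓝 p] g) : pt f p = pt g p := by
  unfold pt; rw [h.fderiv_eq]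

lemma diffAt_fderiv {f : ℝ × ℝ → ℝ} {p : ℝ × ℝ} (hf : ContDiffAt ℝ 2 f p) :
    DifferentiableAt ℝ (fderiv ℝ f) p :=
  (hf.fderiv_right (m := 1) (by norm_num)).differentiableAt (by norm_num)

lemma diffAt_apply_fderiv {f : ℝ × ℝ → ℝ} {p : ℝ × ℝ} (hf : ContDiffAt ℝ 2 f p)
    (w : ℝ × ℝ) : DifferentiableAt ℝ (fun q => fderiv ℝ f q w) p :=
  (ContinuousLinearMap.apply ℝ ℝ w).differentiable.differentiableAt.comp p (diffAt_fderiv hf)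

lemma diffAt_pt {f : ℝ × ℝ → ℝ} {p : ℝ × ℝ} (hf : ContDiffAt ℝ 2 f p) :
    DifferentiableAt ℝ (pt f) p := diffAt_apply_fderiv hf _

lemma diffAt_px {f : ℝ × ℝ → ℝ} {p : ℝ × ℝ} (hf : ContDiffAt ℝ 2 f p) :
    DifferentiableAt ℝ (px f) p := diffAt_apply_fderiv hf _

lemma fderiv_apply_fderiv {f : ℝ × ℝ → ℝ} {p : ℝ × ℝ} (hf : ContDiffAt ℝ 2 f p)
    (w e : ℝ × ℝ) :
    fderiv ℝ (fun q => fderiv ℝ f q w) p e = fderiv ℝ (fderiv ℝ f) p e w := by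
  have h : HasFDerivAt (fun q => fderiv ℝ f q w)
      ((ContinuousLinearMap.apply ℝ ℝ w).comp (fderiv ℝ (fderiv ℝ f) p)) p :=
    ((ContinuousLinearMap.apply ℝ ℝ w).hasFDerivAt).comp p (diffAt_fderiv hf).hasFDerivAt
  rw [h.fderiv]; rfl

lemma pt_px_swap {f : ℝ × ℝ → ℝ} {p : ℝ × ℝ} (hf : ContDiffAt ℝ 2 f p) :
    px (pt f) p = pt (px f) p := by
  have hsymm := hf.isSymmSndFDerivAt (by norm_num)
  unfold px pt
  rw [fderiv_apply_fderiv hf, fderiv_apply_fderiv hf]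
  exact hsymm _ _

lemma pt_sfst {s : ℝ → ℝ} (hs : ContDiff ℝ 1 s) (p : ℝ × ℝ) :
    fderiv ℝ (fun q : ℝ × ℝ => s q.1) p (0, 1) = 0 := by
  rw [show (fun q : ℝ × ℝ => s q.1) = s ∘ Prod.fst from rfl,
    fderiv_comp p (hs.differentiable one_ne_zero).differentiableAt differentiableAt_fst]
  rw [fderiv_fst]
  simp

lemma diffAt_sfst {s : ℝ → ℝ} (hs : ContDiff ℝ 1 s) (p : ℝ × ℝ) :
    DifferentiableAt ℝ (fun q : ℝ × ℝ => s q.1) p :=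
  (hs.differentiable one_ne_zero).differentiableAt.comp p differentiableAt_fst

lemma pt_add_mul {v : ℝ × ℝ → ℝ} {s : ℝ → ℝ} {p : ℝ × ℝ}
    (hs : ContDiff ℝ 1 s) (hv : ContDiffAt ℝ 2 v p) :
    pt (fun q => pt v q + s q.1 * v q) p = pt (pt v) p + s p.1 * pt v p := by
  have hptv : DifferentiableAt ℝ (pt v) p := diffAt_pt hv
  have hvd : DifferentiableAt ℝ v p := hv.differentiableAt (by norm_num)
  have hsf := diffAt_sfst hs p
  show fderiv ℝ (fun q => pt v q + s q.1 * v q) p (0, 1) = _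
  rw [fderiv_fun_add hptv (hsf.fun_mul hvd), fderiv_fun_mul hsf hvd]
  simp only [ContinuousLinearMap.add_apply, ContinuousLinearMap.smul_apply,
    pt_sfst hs p, smul_eq_mul]
  unfold pt
  ring

lemma pt_sub_mul {v : ℝ × ℝ → ℝ} {s : ℝ → ℝ} {p : ℝ × ℝ}
    (hs : ContDiff ℝ 1 s) (hv : ContDiffAt ℝ 2 v p) :
    pt (fun q => pt v q - s q.1 * v q) p = pt (pt v) p - s p.1 * pt v p := by
  have hptv : DifferentiableAt ℝ (pt v) p := diffAt_pt hv
  have hvd : DifferentiableAt ℝ v p := hv.differentiableAt (by norm_num)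
  have hsf := diffAt_sfst hs p
  show fderiv ℝ (fun q => pt v q - s q.1 * v q) p (0, 1) = _
  rw [fderiv_fun_sub hptv (hsf.fun_mul hvd), fderiv_fun_mul hsf hvd]
  simp only [ContinuousLinearMap.sub_apply, ContinuousLinearMap.add_apply,
    ContinuousLinearMap.smul_apply, pt_sfst hs p, smul_eq_mul]
  unfold pt
  ring

end Aux

/-- if `W` is a C² solution of `W_z̄ = -(s(x) j / 2) conj W`, then
`w := W_z + (s(x) j / 2) conj W` satisfies `w_z̄ = (s(x) j / 2) conj w`. -/
theorem FG_derivative_satisfies_successor_vekua (Ω : Set (ℝ × ℝ)) (hΩ : IsOpen Ω)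
    (s : ℝ → ℝ) (hs : ContDiff ℝ 1 s) (W : ℝ × ℝ → Hyp)
    (hWre : ContDiffOn ℝ 2 (reP W) Ω) (hWim : ContDiffOn ℝ 2 (imP W) Ω)
    (hVek : ∀ p ∈ Ω, dzbar W p = (-(s p.1) / 2) • (Hyp.j * Hyp.conj (W p))) :
    ∀ p ∈ Ω,
      dzbar (fun q => dz W q + ((s q.1 / 2) • Hyp.j) * Hyp.conj (W q)) p =
        ((s p.1 / 2) • Hyp.j) *
          Hyp.conj (dz W p + ((s p.1 / 2) • Hyp.j) * Hyp.conj (W p)) := by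
  intro p hp
  have hmem : Ω ∈ nhds p := hΩ.mem_nhds hp
  have hu2 : ContDiffAt ℝ 2 (reP W) p := hWre.contDiffAt hmem
  have hv2 : ContDiffAt ℝ 2 (imP W) p := hWim.contDiffAt hmem
  have hA : ∀ q ∈ Ω, px (reP W) q = pt (imP W) q + s q.1 * (W q).im := by
    intro q hq
    have h := congrArg Hyp.re (hVek q hq)
    simp only [dzbar, Hyp.smul_re', Hyp.mul_re', Hyp.conj_re', Hyp.conj_im',
      Hyp.j_re', Hyp.j_im', reP, imP] at h
    ring_nf at h ⊢
    linarith
  have hB : ∀ q ∈ Ω, px (imP W) q = pt (reP W) q - s q.1 * (W q).re := by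
    intro q hq
    have h := congrArg Hyp.im (hVek q hq)
    simp only [dzbar, Hyp.smul_im', Hyp.mul_im', Hyp.conj_re', Hyp.conj_im',
      Hyp.j_re', Hyp.j_im', reP, imP] at h
    ring_nf at h ⊢
    linarith
  have hEre : (reP (fun q => dz W q + ((s q.1 / 2) • Hyp.j) * Hyp.conj (W q)))
      =ᶠ[nhds p] pt (imP W) := by
    filter_upwards [hmem] with q hq
    have hAq := hA q hq
    simp only [reP, imP, dz, Hyp.add_re', Hyp.mul_re', Hyp.smul_re', Hyp.smul_im',
      Hyp.conj_re', Hyp.conj_im', Hyp.j_re', Hyp.j_im']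
    ring_nf
    ring_nf at hAq
    linarith
  have hEim : (imP (fun q => dz W q + ((s q.1 / 2) • Hyp.j) * Hyp.conj (W q)))
      =ᶠ[nhds p] pt (reP W) := by
    filter_upwards [hmem] with q hq
    have hBq := hB q hq
    simp only [reP, imP, dz, Hyp.add_im', Hyp.mul_im', Hyp.smul_re', Hyp.smul_im',
      Hyp.conj_re', Hyp.conj_im', Hyp.j_re', Hyp.j_im']
    ring_nf
    ring_nf at hBq
    linarith
  have hre_p : (dz W p + ((s p.1 / 2) • Hyp.j) * Hyp.conj (W p)).re = pt (imP W) p := by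
    have := hEre.eq_of_nhds
    simpa [reP] using this
  have him_p : (dz W p + ((s p.1 / 2) • Hyp.j) * Hyp.conj (W p)).im = pt (reP W) p := by
    have := hEim.eq_of_nhds
    simpa [imP] using this
  have hA' : pt (px (reP W)) p = pt (pt (imP W)) p + s p.1 * pt (imP W) p := by
    have he : px (reP W) =ᶠ[nhds p] fun q => pt (imP W) q + s q.1 * (imP W) q := by
      filter_upwards [hmem] with q hq using hA q hq
    rw [pt_congr he]
    exact pt_add_mul hs hv2
  have hB' : pt (px (imP W)) p = pt (pt (reP W)) p - s p.1 * pt (reP W) p := by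
    have he : px (imP W) =ᶠ[nhds p] fun q => pt (reP W) q - s q.1 * (reP W) q := by
      filter_upwards [hmem] with q hq using hB q hq
    rw [pt_congr he]
    exact pt_sub_mul hs hu2
  have F1 : px (pt (imP W)) p - pt (pt (reP W)) p = -(s p.1) * pt (reP W) p := by
    rw [pt_px_swap hv2, hB']; ring
  have F2 : px (pt (reP W)) p - pt (pt (imP W)) p = s p.1 * pt (imP W) p := by
    rw [pt_px_swap hu2, hA']; ring
  apply Hyp.ext'
  · simp only [dzbar, Hyp.mul_re', Hyp.smul_re', Hyp.smul_im', Hyp.conj_re',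
      Hyp.conj_im', Hyp.j_re', Hyp.j_im']
    rw [px_congr hEre, pt_congr hEim, hre_p, him_p]
    ring_nf
    ring_nf at F1
    linarith
  · simp only [dzbar, Hyp.mul_im', Hyp.smul_re', Hyp.smul_im', Hyp.conj_re',
      Hyp.conj_im', Hyp.j_re', Hyp.j_im']
    rw [px_congr hEim, pt_congr hEre, hre_p, him_p]
    ring_nf
    ring_nf at F2
    linarith
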